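/- Fix ξ > 0 and define C_ℓ := (ℓ/ξ)/(1 + ℓ/ξ) = ℓ/(ℓ + ξ) for positive integers ℓ. Then for all integers 1 ≤ i ≤ j, the product ∏_{ℓ=i}^{j} C_ℓ ≤ ((i + ξ)/(j + 1 + ξ))^ξ. -/

import Mathlib

open Real

lemma key_9 (ξ : ℝ) (hξ : 0 < ξ) (ℓ : ℕ) (hℓ : 1 ≤ ℓ) :
    (ℓ : ℝ) / (ℓ + ξ) ≤ (((ℓ : ℝ) + ξ) / ((ℓ : ℝ) + 1 + ξ)) ^ ξ := by
  have hℓpos : (0 : ℝ) < ℓ := by exact_mod_cast hℓ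
  have ha : (0 : ℝ) < (ℓ : ℝ) + ξ := by linarith
  have hb : (0 : ℝ) < (ℓ : ℝ) + 1 + ξ := by linarith
  have hx : (0 : ℝ) < (ℓ : ℝ) / (ℓ + ξ) := div_pos hℓpos ha
  have hy : (0 : ℝ) < ((ℓ : ℝ) + ξ) / ((ℓ : ℝ) + 1 + ξ) := div_pos ha hb
  rw [Real.le_rpow_iff_log_le hx hy]
  rw [Real.log_div (ne_of_gt hℓpos) (ne_of_gt ha), Real.log_div (ne_of_gt ha) (ne_of_gt hb)]
  -- need : log ℓ - log a ≤ ξ * (log a - log b)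
  have h1 : Real.log ((ℓ : ℝ) + ξ) - Real.log ℓ ≥ ξ / ((ℓ : ℝ) + ξ) := by
    have := Real.log_le_sub_one_of_pos (show (0:ℝ) < (ℓ:ℝ)/((ℓ:ℝ)+ξ) from hx)
    rw [Real.log_div (ne_of_gt hℓpos) (ne_of_gt ha)] at this
    have heq : (ℓ : ℝ) / ((ℓ:ℝ) + ξ) - 1 = -(ξ / ((ℓ:ℝ) + ξ)) := by
      field_simp
      ring
    rw [heq] at this
    linarith
  have h2 : Real.log ((ℓ : ℝ) + 1 + ξ) - Real.log ((ℓ : ℝ) + ξ) ≤ 1 / ((ℓ : ℝ) + ξ) := by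
    have hq : (0:ℝ) < ((ℓ:ℝ)+1+ξ)/((ℓ:ℝ)+ξ) := div_pos hb ha
    have := Real.log_le_sub_one_of_pos hq
    rw [Real.log_div (ne_of_gt hb) (ne_of_gt ha)] at this
    have heq : ((ℓ:ℝ)+1+ξ)/((ℓ:ℝ)+ξ) - 1 = 1 / ((ℓ:ℝ) + ξ) := by
      field_simp
      ring
    rw [heq] at this
    linarith
  have h3 := mul_le_mul_of_nonneg_left h2 (le_of_lt hξ)
  have h4 : ξ * (1 / ((ℓ:ℝ) + ξ)) = ξ / ((ℓ:ℝ) + ξ) := by ring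
  nlinarith [h3, h4]

theorem stmt_9 (ξ : ℝ) (hξ : 0 < ξ) (i j : ℕ) (hi : 1 ≤ i) (hij : i ≤ j) :
    (∏ ℓ ∈ Finset.Icc i j, (ℓ : ℝ) / (ℓ + ξ))
      ≤ (((i : ℝ) + ξ) / ((j : ℝ) + 1 + ξ)) ^ ξ := by
  induction j, hij using Nat.le_induction with
  | base =>
    rw [Finset.Icc_self, Finset.prod_singleton]
    exact key_9 ξ hξ i hi
  | succ j hij ih =>
    have hipos : (0 : ℝ) < i := by exact_mod_cast hi
    have hjpos : (0 : ℝ) < (j : ℝ) + 1 := by positivity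
    rw [Finset.prod_Icc_succ_top (by omega : i ≤ j + 1)]
    have hC : (0 : ℝ) ≤ ((j+1 : ℕ) : ℝ) / (((j+1:ℕ)) + ξ) := by positivity
    have h1 : (∏ ℓ ∈ Finset.Icc i j, (ℓ : ℝ) / (ℓ + ξ)) * (((j+1:ℕ)) / (((j+1:ℕ):ℝ) + ξ))
        ≤ (((i : ℝ) + ξ) / ((j : ℝ) + 1 + ξ)) ^ ξ * ((((j:ℝ)+1) + ξ) / (((j:ℝ)+1) + 1 + ξ)) ^ ξ := by
      apply mul_le_mul ih ?_ hC (by positivity)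
      have := key_9 ξ hξ (j+1) (by omega)
      push_cast at this ⊢
      convert this using 3 <;> ring
    refine h1.trans ?_
    rw [← Real.mul_rpow (by positivity) (by positivity)]
    apply Real.rpow_le_rpow (by positivity) ?_ (le_of_lt hξ)
    push_cast
    rw [div_mul_div_comm]
    rw [div_le_div_iff₀ (by positivity) (by positivity)]
    ring_nf
    nlinarith [hξ, hipos, hjpos, mul_pos hjpos hξ]
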